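/- Let δ > 0, a ∈ ℝ, and let A, Q : I → ℝ be differentiable functions on a real interval I with Q(t) ≠ 0, satisfying A' + 2A² = -a and Q' = 2AQ + δ²/(2Q) on I. Then the function t ↦ (a + 2A(t)²)·Q(t)² + δ²·A(t) has derivative zero on I, i.e., (a + 2A²)Q² + δ²A is a first integral of the system. -/

import Mathlib

/-- If `A, Q` are differentiable on a real interval `I` with `Q ≠ 0`, satisfying the
Riccati equation `A' + 2A² = -a` and the Bernoulli equation `Q' = 2AQ + δ²/(2Q)` on `I`,
then `(a + 2A²)Q² + δ²A` has zero derivative on `I`, i.e. it is a first integral of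
the system. -/
theorem semiaxis_first_integral
    (δ a : ℝ) (hδ : 0 < δ) (I : Set ℝ) (hI : I.OrdConnected)
    (A Q : ℝ → ℝ)
    (hQne : ∀ t ∈ I, Q t ≠ 0)
    (hA : ∀ t ∈ I, HasDerivAt A (-a - 2 * (A t) ^ 2) t)
    (hQ : ∀ t ∈ I, HasDerivAt Q (2 * A t * Q t + δ ^ 2 / (2 * Q t)) t) :
    ∀ t ∈ I,
      HasDerivAt (fun s => (a + 2 * (A s) ^ 2) * (Q s) ^ 2 + δ ^ 2 * A s) 0 t := by
  intro t ht
  have hQt := hQne t ht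
  have hA' := hA t ht
  have hQ' := hQ t ht
  have h := (((hA'.pow 2).const_mul 2 |>.const_add a).mul (hQ'.pow 2)).add
    (hA'.const_mul (δ ^ 2))
  convert h using 1
  · rfl
  · rfl
  · rfl
  · simp only [Pi.pow_apply]
    field_simp
    ring
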